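/- For n ≥ 2 let P_n = {x ∈ ℝ^{n²}_{≥0} : Σ_{e∈P} x(e) = 1 for all perfect matchings P of K_{n,n}}. Then P_n is a lattice polytope whose vertex set is exactly {m_v : v ∈ V ∪ W}, the 2n indicator vectors of edge stars of vertices of K_{n,n}, and P_n is compressed. -/

import Mathlib

open BigOperators Pointwise

/-- The polytope `P_n ⊆ ℝ^{n²}`: nonnegative edge-vectors of `K_{n,n}` summing to `1`
on every perfect matching. -/
def matchingPolytope (n : ℕ) : Set (Fin n × Fin n → ℝ) :=
  {x | (∀ e, 0 ≤ x e) ∧ ∀ σ : Equiv.Perm (Fin n), ∑ i, x (i, σ i) = 1}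

/-- The indicator vector of the star of a vertex of `K_{n,n}`. -/
def vertexStar (n : ℕ) : Fin n ⊕ Fin n → Fin n × Fin n → ℤ
  | .inl i => fun e => if e.1 = i then 1 else 0
  | .inr j => fun e => if e.2 = j then 1 else 0

lemma exists_perm_two {n : ℕ} {i k j l : Fin n} (hik : i ≠ k) (hjl : j ≠ l) :
    ∃ σ : Equiv.Perm (Fin n), σ i = j ∧ σ k = l := by
  refine ⟨Equiv.swap (Equiv.swap i j k) l * Equiv.swap i j, ?_, ?_⟩
  · simp only [Equiv.Perm.mul_apply, Equiv.swap_apply_left]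
    apply Equiv.swap_apply_of_ne_of_ne
    · intro h
      apply hik
      have := congrArg (Equiv.swap i j) h.symm
      exact (by simpa [Equiv.swap_apply_left] using this : k = i).symm
    · exact hjl
  · simp [Equiv.Perm.mul_apply, Equiv.swap_apply_left]

lemma exchange {n : ℕ} {x : Fin n × Fin n → ℝ} (hx : x ∈ matchingPolytope n)
    (i k j l : Fin n) : x (i, j) + x (k, l) = x (i, l) + x (k, j) := by
  rcases eq_or_ne i k with rfl | hik
  · ring
  rcases eq_or_ne j l with rfl | hjl
  · ring
  obtain ⟨σ, hσi, hσk⟩ := exists_perm_two hik hjl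
  have h1 := hx.2 σ
  have h2 := hx.2 (σ * Equiv.swap i k)
  have key : ∀ h : Fin n → ℝ, ∑ m, h m = h i + (h k + ∑ m ∈ (Finset.univ.erase i).erase k, h m) := by
    intro h
    rw [Finset.add_sum_erase _ _ (by simp [hik.symm]), Finset.add_sum_erase _ _ (by simp)]
  rw [key] at h1 h2
  have hsame : ∑ m ∈ (Finset.univ.erase i).erase k, x (m, (σ * Equiv.swap i k) m)
      = ∑ m ∈ (Finset.univ.erase i).erase k, x (m, σ m) := by
    apply Finset.sum_congr rfl
    intro m hm
    simp only [Finset.mem_erase] at hm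
    rw [Equiv.Perm.mul_apply, Equiv.swap_apply_of_ne_of_ne hm.2.1 hm.1]
  rw [hsame] at h2
  simp only [Equiv.Perm.mul_apply, Equiv.swap_apply_left, Equiv.swap_apply_right, hσi, hσk] at h1 h2
  linarith

lemma le_one {n : ℕ} {x : Fin n × Fin n → ℝ} (hx : x ∈ matchingPolytope n)
    (e : Fin n × Fin n) : x e ≤ 1 := by
  obtain ⟨i, j⟩ := e
  have h := hx.2 (Equiv.swap i j)
  have : x (i, Equiv.swap i j i) ≤ ∑ m, x (m, Equiv.swap i j m) :=
    Finset.single_le_sum (f := fun m => x (m, Equiv.swap i j m)) (fun m _ => hx.1 _) (Finset.mem_univ i)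
  rw [Equiv.swap_apply_left] at this
  linarith

lemma star_mem {n : ℕ} (v : Fin n ⊕ Fin n) :
    (fun e => ((vertexStar n v e : ℤ) : ℝ)) ∈ matchingPolytope n := by
  cases v with
  | inl i =>
    constructor
    · intro e; simp [vertexStar]; positivity
    · intro σ
      simp only [vertexStar]
      push_cast [apply_ite]
      simp [Finset.sum_ite_eq']
  | inr j =>
    constructor
    · intro e; simp [vertexStar]; positivity
    · intro σ
      simp only [vertexStar]
      push_cast [apply_ite]
      rw [show (∑ m, if σ m = j then (1:ℝ) else 0) = ∑ m, if m = j then (1:ℝ) else 0 from Equiv.sum_comp σ (fun t => if t = j then (1:ℝ) else 0)]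
      simp [Finset.sum_ite_eq']

lemma polytope_convex (n : ℕ) : Convex ℝ (matchingPolytope n) := by
  intro x hx y hy a b ha hb hab
  constructor
  · intro e
    have := hx.1 e; have := hy.1 e
    simp only [Pi.add_apply, Pi.smul_apply, smul_eq_mul]
    positivity
  · intro σ
    simp only [Pi.add_apply, Pi.smul_apply, smul_eq_mul]
    rw [Finset.sum_add_distrib, ← Finset.mul_sum, ← Finset.mul_sum, hx.2 σ, hy.2 σ]
    linarith

/-- `P_n` is a lattice polytope whose vertex set is exactly the `2n`
vertex-star indicator vectors, and `P_n` is compressed (it is the intersection of the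
unit cube with an affine subspace). -/
theorem matchingPolytope_lattice_vertices_compressed (n : ℕ) (hn : 2 ≤ n) :
    matchingPolytope n
      = convexHull ℝ ((fun v => fun e => ((vertexStar n v e : ℤ) : ℝ)) ''
          (Set.univ : Set (Fin n ⊕ Fin n))) ∧
    Set.extremePoints ℝ (matchingPolytope n)
      = (fun v => fun e => ((vertexStar n v e : ℤ) : ℝ)) ''
          (Set.univ : Set (Fin n ⊕ Fin n)) ∧
    ∃ W : AffineSubspace ℝ (Fin n × Fin n → ℝ),
      matchingPolytope n
        = Set.Icc (0 : Fin n × Fin n → ℝ) 1 ∩ (W : Set (Fin n × Fin n → ℝ)) := by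
  have hn0 : 0 < n := by omega
  set f : (Fin n ⊕ Fin n) → (Fin n × Fin n → ℝ) :=
    fun v => fun e => ((vertexStar n v e : ℤ) : ℝ) with hf
  have hpart1 : matchingPolytope n = convexHull ℝ (f '' Set.univ) := by
    apply Set.Subset.antisymm
    · intro x hx
      set z : Fin n := ⟨0, hn0⟩ with hz
      obtain ⟨i₀, -, hmin⟩ := Finset.exists_min_image Finset.univ (fun i => x (i, z))
        ⟨z, Finset.mem_univ z⟩
      set w : Fin n ⊕ Fin n → ℝ :=
        Sum.elim (fun i => x (i, z) - x (i₀, z)) (fun j => x (i₀, j)) with hw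
      have hw0 : ∀ v ∈ Finset.univ, 0 ≤ w v := by
        rintro (i | j) -
        · simpa [hw] using hmin i (Finset.mem_univ i)
        · exact hx.1 _
      have hw1 : ∑ v, w v = 1 := by
        rw [Fintype.sum_sum_type]
        simp only [hw, Sum.elim_inl, Sum.elim_inr]
        have hid := hx.2 1
        simp only [Equiv.Perm.one_apply] at hid
        rw [← Finset.sum_add_distrib, ← hid]
        apply Finset.sum_congr rfl
        intro i _
        have := exchange hx i i₀ i z
        linarith
      have hmem := Finset.centerMass_mem_convexHull (t := Finset.univ) (w := w) (z := f)
        hw0 (by rw [hw1]; norm_num) (fun v _ => Set.mem_image_of_mem _ (Set.mem_univ v))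
      rw [Finset.centerMass_eq_of_sum_1 _ _ hw1] at hmem
      have hxeq : x = ∑ v, w v • f v := by
        funext e
        obtain ⟨i, j⟩ := e
        rw [Finset.sum_apply]
        simp only [Pi.smul_apply, smul_eq_mul]
        rw [Fintype.sum_sum_type]
        have h1 : ∀ i' : Fin n, w (Sum.inl i') * f (Sum.inl i') (i, j)
            = if i = i' then w (Sum.inl i') else 0 := by
          intro i'
          simp only [hf, vertexStar]
          push_cast [apply_ite]
          split <;> simp_all
        have h2 : ∀ j' : Fin n, w (Sum.inr j') * f (Sum.inr j') (i, j)
            = if j = j' then w (Sum.inr j') else 0 := by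
          intro j'
          simp only [hf, vertexStar]
          push_cast [apply_ite]
          split <;> simp_all
        simp only [h1, h2, Finset.sum_ite_eq, Finset.mem_univ, if_true]
        simp only [hw, Sum.elim_inl, Sum.elim_inr]
        have := exchange hx i i₀ j z
        linarith
      rw [hxeq]
      exact hmem
    · apply convexHull_min
      · rintro _ ⟨v, -, rfl⟩
        exact star_mem v
      · exact polytope_convex n
  refine ⟨hpart1, ?_, ?_⟩
  · apply Set.Subset.antisymm
    · rw [hpart1]
      exact extremePoints_convexHull_subset
    · rintro _ ⟨v, -, rfl⟩
      refine ⟨star_mem v, ?_⟩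
      intro x1 hx1 x2 hx2 hseg
      obtain ⟨a, b, ha, hb, hab, heq⟩ := hseg
      have key : ∀ e, x1 e = f v e ∧ x2 e = f v e := by
        intro e
        have hcases : f v e = 0 ∨ f v e = 1 := by
          cases v <;> simp only [hf, vertexStar] <;> split <;> norm_num
        have he : a * x1 e + b * x2 e = f v e := by
          have := congrFun heq e
          simpa using this
        have b1 := hx1.1 e
        have b2 := hx2.1 e
        have c1 := le_one hx1 e
        have c2 := le_one hx2 e
        rcases hcases with h | h <;> rw [h] at he ⊢ <;> constructor <;> nlinarith
      exact funext fun e => (key e).1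
  · refine ⟨AffineSubspace.mk {x | ∀ σ : Equiv.Perm (Fin n), ∑ i, x (i, σ i) = 1} ?_, ?_⟩
    · intro c p1 p2 p3 h1 h2 h3 σ
      have hpt : ∀ i : Fin n, (c • (p1 -ᵥ p2) +ᵥ p3) (i, σ i)
          = c * (p1 (i, σ i) - p2 (i, σ i)) + p3 (i, σ i) := fun i => rfl
      simp only [Set.mem_setOf_eq] at h1 h2 h3 ⊢
      simp_rw [hpt]
      rw [Finset.sum_add_distrib, ← Finset.mul_sum, Finset.sum_sub_distrib, h1 σ, h2 σ, h3 σ]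
      ring
    · ext x
      constructor
      · intro hx
        refine ⟨Set.mem_Icc.mpr ⟨?_, ?_⟩, hx.2⟩
        · intro e
          simpa using hx.1 e
        · intro e
          simpa using le_one hx e
      · rintro ⟨hicc, hW⟩
        refine ⟨fun e => ?_, hW⟩
        have := (Set.mem_Icc.mp hicc).1 e
        simpa using this
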